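/- Let $(c_m)_{m\in\mathbb{N}^r}$ be a family of elements of a ring filtered by a dimension function $\dim$ satisfying $\dim(x+y)\le\max(\dim x,\dim y)$ and $\dim(x\cdot L^{-k}) = \dim(x) - k$. Assume there exists $a>0$ with $\dim(c_m)\le -a|m|$ for all $m$, where $|m|=\sum_i m_i$. Then for every non-empty subset $A\subseteq\{1,\dots,r\}$ and every non-negative integer $b$, and every $m$ with all coordinates at least $b$, one has $\dim\big(\sum_{m'\le m-b} c_{m'} L^{|m'_A|-|m_A|}\big) \le -\tfrac{\min(1,a)}{2}\min_{\alpha\in A}(m_\alpha) - \tfrac{b}{2}\min(1,\,2|A|-a)$, where $m_A$ denotes the restriction of $m$ to $A$ and $b=(b,\dots,b)$. -/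

import Mathlib

lemma dim_finset_sum_le {M : Type*} [CommRing M] (dim : M → EReal)
    (hadd : ∀ x y : M, dim (x + y) ≤ max (dim x) (dim y))
    {ι : Type*} {s : Finset ι} (hs : s.Nonempty) (f : ι → M) (B : EReal)
    (h : ∀ i ∈ s, dim (f i) ≤ B) : dim (∑ i ∈ s, f i) ≤ B := by
  induction hs using Finset.Nonempty.cons_induction with
  | singleton i => simpa using h i (by simp)
  | cons i s hi hs ih =>
    rw [Finset.sum_cons]
    exact (hadd _ _).trans (max_le (h i (by simp)) (ih fun j hj => h j (by simp [hj])))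

/-- Lemma 2.21: dimension bound for weighted partial sums in a ring with a
dimension function `dim` (values in `ℤ ∪ {±∞}`, modelled by `EReal`), where
`Linv` plays the role of `𝕃⁻¹` (so `dim (x * Linv ^ k) = dim x - k`). -/
theorem dim_sum_le_of_dim_le
    {M : Type*} [CommRing M] (dim : M → EReal) (Linv : M)
    (hadd : ∀ x y : M, dim (x + y) ≤ max (dim x) (dim y))
    (hmul : ∀ (x : M) (k : ℕ), dim (x * Linv ^ k) = dim x - k)
    {r : ℕ} (c : (Fin r → ℕ) → M) (a : ℝ) (ha : 0 < a)
    (hc : ∀ m : Fin r → ℕ, dim (c m) ≤ ((-(a * ∑ i, (m i : ℝ))) : ℝ))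
    (A : Finset (Fin r)) (hA : A.Nonempty) (b : ℕ)
    (m : Fin r → ℕ) (hm : ∀ i, b ≤ m i) :
    dim (∑ m' ∈ Fintype.piFinset (fun i => Finset.Iic (m i - b)),
        c m' * Linv ^ (∑ α ∈ A, (m α - m' α))) ≤
      (((-(min 1 a) / 2) * (A.inf' hA fun α => (m α : ℝ))
        - (b : ℝ) / 2 * min 1 (2 * (A.card : ℝ) - a) : ℝ) : EReal) := by
  set t : ℝ := min 1 a with ht
  have ht0 : 0 < t := lt_min one_pos ha
  have hta : t ≤ a := min_le_right _ _
  have ht1 : t ≤ 1 := min_le_left _ _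
  have hb0 : (0:ℝ) ≤ b := by positivity
  have hcard : (1:ℝ) ≤ A.card := by exact_mod_cast hA.card_pos
  set μ : ℝ := A.inf' hA fun α => (m α : ℝ) with hμ
  apply dim_finset_sum_le dim hadd ⟨0, by simp⟩
  intro m' hm'
  rw [hmul]
  have hmem : ∀ i, m' i ≤ m i - b := by
    intro i
    have := Fintype.mem_piFinset.mp hm' i
    simpa using this
  have hle : ∀ i, m' i + b ≤ m i := fun i => (Nat.le_sub_iff_add_le (hm i)).mp (hmem i)
  have hle' : ∀ i, m' i ≤ m i := fun i => le_trans (Nat.le_add_right _ _) (hle i)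
  set K : ℕ := ∑ α ∈ A, (m α - m' α) with hK
  calc dim (c m') - (K : EReal)
      ≤ ((-(a * ∑ i, (m' i : ℝ))) : ℝ) - ((K : ℝ) : EReal) := by
        have hcast : ((K : ℕ) : EReal) = (((K : ℝ)) : EReal) := by norm_cast
        rw [hcast]
        exact EReal.sub_le_sub (hc m') le_rfl
    _ = ((-(a * ∑ i, (m' i : ℝ)) - (K : ℝ) : ℝ) : EReal) := by
        rw [EReal.coe_sub]
    _ ≤ _ := by
        rw [EReal.coe_le_coe_iff]
        have hKcast : (K : ℝ) = (∑ α ∈ A, (m α : ℝ)) - ∑ α ∈ A, (m' α : ℝ) := by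
          rw [hK, Nat.cast_sum, ← Finset.sum_sub_distrib]
          exact Finset.sum_congr rfl fun α _ => by rw [Nat.cast_sub (hle' α)]
        rw [hKcast]
        set SA : ℝ := ∑ α ∈ A, (m α : ℝ) with hSAdef
        set SA' : ℝ := ∑ α ∈ A, (m' α : ℝ) with hSA'def
        set S' : ℝ := ∑ i, (m' i : ℝ) with hS'def
        have hS : SA' ≤ S' :=
          Finset.sum_le_sum_of_subset_of_nonneg (Finset.subset_univ A)
            (fun i _ _ => by positivity)
        -- per-coordinate bound
        have key : ∀ α ∈ A, (1 - a) * (m' α : ℝ) - (m α : ℝ)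
            ≤ -(t/2) * (m α : ℝ) - (b:ℝ)/2 * (2 - t) := by
          intro α _
          have h1 : (m' α : ℝ) + b ≤ m α := by exact_mod_cast hle α
          have h0 : (0:ℝ) ≤ m' α := by positivity
          rcases le_total a 1 with h | h
          · have htt : t = a := min_eq_right h
            rw [htt]
            nlinarith [mul_nonneg (by linarith : (0:ℝ) ≤ 1 - a)
                (by linarith : (0:ℝ) ≤ (m α : ℝ) - b - m' α),
              mul_nonneg ha.le (by linarith : (0:ℝ) ≤ (m α : ℝ) - b)]
          · have htt : t = 1 := min_eq_left h
            rw [htt]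
            nlinarith [mul_nonneg (by linarith : (0:ℝ) ≤ a - 1) h0]
        have hsum := Finset.sum_le_sum key
        have hexp : ∑ α ∈ A, ((1 - a) * (m' α : ℝ) - (m α : ℝ)) = (1 - a) * SA' - SA := by
          rw [Finset.sum_sub_distrib, ← Finset.mul_sum]
        have hexp2 : ∑ α ∈ A, (-(t/2) * (m α : ℝ) - (b:ℝ)/2 * (2 - t))
            = -(t/2) * SA - (A.card : ℝ) * ((b:ℝ)/2 * (2 - t)) := by
          rw [Finset.sum_sub_distrib, ← Finset.mul_sum, Finset.sum_const, nsmul_eq_mul]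
        rw [hexp, hexp2] at hsum
        -- SA ≥ μ + (|A|-1) b
        obtain ⟨α₀, hα₀, hinf⟩ := Finset.exists_mem_eq_inf' hA (fun α => (m α : ℝ))
        have hSA : μ + ((A.card : ℝ) - 1) * b ≤ SA := by
          rw [hSAdef, ← Finset.add_sum_erase _ _ hα₀]
          have h2 : ((A.card : ℝ) - 1) * b ≤ ∑ α ∈ A.erase α₀, (m α : ℝ) := by
            have h3 := Finset.card_nsmul_le_sum (A.erase α₀) (fun α => (m α : ℝ)) (b : ℝ)
              (fun x _ => by show (b : ℝ) ≤ (m x : ℝ); exact_mod_cast hm x)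
            rw [nsmul_eq_mul, Finset.card_erase_of_mem hα₀] at h3
            have h4 : ((A.card - 1 : ℕ) : ℝ) = (A.card : ℝ) - 1 := by
              rw [Nat.cast_sub hA.card_pos, Nat.cast_one]
            rw [h4] at h3
            exact h3
          rw [hμ, hinf]
          linarith
        have hmin : min 1 (2 * (A.card : ℝ) - a) ≤ 2 * (A.card : ℝ) - t := by
          rcases le_total a 1 with h | h
          · have : t = a := min_eq_right h
            rw [this]; exact min_le_right _ _
          · have : t = 1 := min_eq_left h
            rw [this]
            exact le_trans (min_le_left _ _) (by linarith)
        nlinarith [mul_nonneg ha.le (by linarith : (0:ℝ) ≤ S' - SA'),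
          mul_nonneg ht0.le (by linarith : (0:ℝ) ≤ SA - μ - ((A.card:ℝ) - 1) * b),
          mul_nonneg hb0 (by linarith : (0:ℝ) ≤ 2 * (A.card:ℝ) - t - min 1 (2 * (A.card:ℝ) - a))]
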